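/- Let G be a finite undirected simple graph without self-loops on vertex set V with embedding X : V → ℝ^d, node energies E_i = (1/2)·C·∑_{j ∈ N_i} ‖X_j − X_i‖² for a constant C > 0, unnormalized probabilities P_i = exp(−E_i/T), entropy S(X) = −∑_{i∈V} P_i ln P_i, and P̄_i = P_i(1 + ln P_i). Then the gradient of S with respect to X_i equals (C/T)·∑_{j ∈ N_i} (P̄_j + P̄_i)·(X_i − X_j). -/

import Mathlib

open InnerProductSpace in
private lemma sq_dist_hasFDerivAt {d : ℕ} (a x : EuclideanSpace ℝ (Fin d)) :
    HasFDerivAt (fun y => ‖y - a‖^2) ((toDual ℝ (EuclideanSpace ℝ (Fin d))) ((2:ℝ) • (x - a))) x := by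
  have h1 : HasFDerivAt (fun y : EuclideanSpace ℝ (Fin d) => y - a)
      (ContinuousLinearMap.id ℝ _) x := (hasFDerivAt_id x).sub_const a
  have h2 := h1.inner ℝ h1
  have h3 : (fun y : EuclideanSpace ℝ (Fin d) => ‖y - a‖^2) = fun t => ⟪t - a, t - a⟫_ℝ := by
    funext y
    rw [← real_inner_self_eq_norm_sq]
  rw [h3]
  refine h2.congr_fderiv (ContinuousLinearMap.ext fun w => ?_)
  rw [toDual_apply_apply]
  show (fderivInnerCLM ℝ (x - a, x - a)) (w, w) = _
  rw [fderivInnerCLM_apply, real_inner_smul_left, real_inner_comm w]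
  ring

open Finset InnerProductSpace in
/-- Entropy gradient theorem: with E_k = (C/2)∑_{j∈N_k}‖X_j−X_k‖²,
P_k = exp(−E_k/T), S = −∑_k P_k ln P_k and P̄_k = P_k(1+ln P_k), the gradient
of S with respect to X_i is (C/T)·∑_{j∈N_i}(P̄_j + P̄_i)(X_i − X_j). -/
theorem entropy_gradient {V : Type*} [Fintype V] [DecidableEq V]
    (G : SimpleGraph V) [DecidableRel G.Adj] (d : ℕ)
    (X : V → EuclideanSpace ℝ (Fin d)) (C T : ℝ) (hC : 0 < C) (hT : 0 < T)
    (Efun : (V → EuclideanSpace ℝ (Fin d)) → V → ℝ)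
    (hE : ∀ Y k, Efun Y k = (C / 2) * ∑ j ∈ G.neighborFinset k, ‖Y j - Y k‖ ^ 2)
    (P : (V → EuclideanSpace ℝ (Fin d)) → V → ℝ)
    (hP : ∀ Y k, P Y k = Real.exp (-(Efun Y k) / T))
    (S : (V → EuclideanSpace ℝ (Fin d)) → ℝ)
    (hS : ∀ Y, S Y = -∑ k, P Y k * Real.log (P Y k))
    (Pbar : V → ℝ) (hPbar : ∀ k, Pbar k = P X k * (1 + Real.log (P X k)))
    (i : V) :
    gradient (fun y => S (Function.update X i y)) (X i)
      = (C / T) • ∑ j ∈ G.neighborFinset i, (Pbar j + Pbar i) • (X i - X j) := by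
  classical
  set φ : ℝ → ℝ := fun u => u / T * Real.exp (-u / T) with hφdef
  have hφ : ∀ u : ℝ, HasDerivAt φ (Real.exp (-u / T) * (1 - u / T) / T) u := by
    intro u
    have h1 : HasDerivAt (fun u : ℝ => u / T) (1 / T) u := (hasDerivAt_id u).div_const T
    have h2 : HasDerivAt (fun u : ℝ => Real.exp (-u / T)) (Real.exp (-u / T) * (-1 / T)) u := by
      have h0 : HasDerivAt (fun u : ℝ => -u / T) (-1 / T) u := ((hasDerivAt_id u).neg).div_const T
      simpa using h0.exp
    have h3 : HasDerivAt φ _ u := h1.mul h2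
    convert h3 using 1
    ring
  set e : V → EuclideanSpace ℝ (Fin d) → ℝ := fun k y => Efun (Function.update X i y) k with hedef
  set g : V → EuclideanSpace ℝ (Fin d) := fun k =>
    if k = i then C • ∑ j ∈ G.neighborFinset i, (X i - X j)
    else if G.Adj k i then C • (X i - X k) else 0 with hgdef
  have hek : ∀ k, HasFDerivAt (e k) (toDual ℝ (EuclideanSpace ℝ (Fin d)) (g k)) (X i) := by
    intro k
    by_cases hk : k = i
    · subst hk
      have he1 : e k = fun y => (C / 2) * ∑ j ∈ G.neighborFinset k, ‖y - X j‖ ^ 2 := by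
        funext y
        simp only [hedef]
        rw [hE]
        congr 1
        refine Finset.sum_congr rfl fun j hj => ?_
        have hji : j ≠ k := fun h => (G.notMem_neighborFinset_self k) (h ▸ hj)
        rw [Function.update_of_ne hji, Function.update_self, norm_sub_rev]
      rw [he1]
      have hsum : HasFDerivAt
          (fun y : EuclideanSpace ℝ (Fin d) => ∑ j ∈ G.neighborFinset k, ‖y - X j‖ ^ 2)
          (∑ j ∈ G.neighborFinset k, toDual ℝ (EuclideanSpace ℝ (Fin d)) ((2:ℝ) • (X k - X j)))
          (X k) :=
        HasFDerivAt.fun_sum fun j _ => sq_dist_hasFDerivAt (X j) (X k)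
      have h5 := hsum.const_mul (C / 2)
      refine h5.congr_fderiv (Eq.symm ?_)
      rw [← map_sum, ← map_smul]
      congr 1
      simp only [hgdef, if_pos rfl]
      rw [Finset.smul_sum, Finset.smul_sum]
      refine Finset.sum_congr rfl fun j _ => ?_
      rw [smul_smul]
      norm_num
    · have he1 : e k = fun y : EuclideanSpace ℝ (Fin d) => (C / 2) *
          ∑ j ∈ G.neighborFinset k, (if j = i then ‖y - X k‖ ^ 2 else ‖X j - X k‖ ^ 2) := by
        funext y
        simp only [hedef]
        rw [hE]
        congr 1
        refine Finset.sum_congr rfl fun j hj => ?_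
        rw [Function.update_of_ne hk]
        by_cases hji : j = i
        · subst hji; rw [Function.update_self, if_pos rfl]
        · rw [Function.update_of_ne hji, if_neg hji]
      rw [he1]
      have hsum : HasFDerivAt (fun y : EuclideanSpace ℝ (Fin d) => ∑ j ∈ G.neighborFinset k,
            (if j = i then ‖y - X k‖ ^ 2 else ‖X j - X k‖ ^ 2))
          (∑ j ∈ G.neighborFinset k,
            (if j = i then toDual ℝ (EuclideanSpace ℝ (Fin d)) ((2:ℝ) • (X i - X k)) else 0))
          (X i) := by
        refine HasFDerivAt.fun_sum fun j _ => ?_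
        by_cases hji : j = i
        · simp only [if_pos hji]; exact sq_dist_hasFDerivAt (X k) (X i)
        · simp only [if_neg hji]; exact hasFDerivAt_const _ _
      have h5 := hsum.const_mul (C / 2)
      refine h5.congr_fderiv (Eq.symm ?_)
      rw [Finset.sum_ite_eq' (G.neighborFinset k) i]
      by_cases hadj : G.Adj k i
      · have hmem : i ∈ G.neighborFinset k := by
          rw [SimpleGraph.mem_neighborFinset]; exact hadj
        rw [if_pos hmem]
        simp only [hgdef, if_neg hk, if_pos hadj]
        rw [← map_smul]
        congr 1
        rw [smul_smul]
        norm_num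
      · have hmem : i ∉ G.neighborFinset k := by
          rw [SimpleGraph.mem_neighborFinset]; exact hadj
        rw [if_neg hmem]
        simp only [hgdef, if_neg hk, if_neg hadj, map_zero, smul_zero]
  have hf : (fun y => S (Function.update X i y)) = fun y => ∑ k, φ (e k y) := by
    funext y
    rw [hS, ← Finset.sum_neg_distrib]
    refine Finset.sum_congr rfl fun k _ => ?_
    rw [hP, Real.log_exp]
    simp only [hφdef, hedef]
    ring
  have hL : HasFDerivAt (fun y => S (Function.update X i y))
      (∑ k, (Real.exp (-(e k (X i)) / T) * (1 - e k (X i) / T) / T) •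
        toDual ℝ (EuclideanSpace ℝ (Fin d)) (g k)) (X i) := by
    rw [hf]
    exact HasFDerivAt.fun_sum fun k _ => (hφ (e k (X i))).comp_hasFDerivAt (X i) (hek k)
  set v : EuclideanSpace ℝ (Fin d) :=
    ∑ k, (Real.exp (-(e k (X i)) / T) * (1 - e k (X i) / T) / T) • g k with hv
  have hL' : HasFDerivAt (fun y => S (Function.update X i y))
      (toDual ℝ (EuclideanSpace ℝ (Fin d)) v) (X i) := by
    rw [hv, map_sum]
    simp only [map_smul]
    exact hL
  have hgrad : HasGradientAt (fun y => S (Function.update X i y)) v (X i) :=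
    hasGradientAt_iff_hasFDerivAt.mpr hL'
  rw [hgrad.gradient]
  have heX : ∀ k, e k (X i) = Efun X k := by
    intro k; simp only [hedef]; rw [Function.update_eq_self]
  have hPb : ∀ k, Pbar k = Real.exp (-(Efun X k) / T) * (1 - Efun X k / T) := by
    intro k; rw [hPbar, hP, Real.log_exp]; ring
  have hcoef : ∀ k, Real.exp (-(e k (X i)) / T) * (1 - e k (X i) / T) / T = Pbar k / T := by
    intro k; rw [heX, hPb]
  have hsplit : ∀ k, (Pbar k / T) • g k =
      (if k = i then (Pbar i / T) • (C • ∑ j ∈ G.neighborFinset i, (X i - X j)) else 0)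
      + (if k ∈ G.neighborFinset i then (Pbar k / T) • (C • (X i - X k)) else 0) := by
    intro k
    by_cases hk : k = i
    · subst hk
      simp [hgdef, G.notMem_neighborFinset_self]
    · simp only [hgdef, if_neg hk]
      by_cases hadj : G.Adj k i
      · have hmem : k ∈ G.neighborFinset i := by
          rw [SimpleGraph.mem_neighborFinset]; exact hadj.symm
        rw [if_pos hadj, if_pos hmem, zero_add]
      · have hmem : k ∉ G.neighborFinset i := by
          rw [SimpleGraph.mem_neighborFinset]; exact fun h => hadj h.symm
        rw [if_neg hadj, if_neg hmem, add_zero, smul_zero]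
  rw [hv]
  calc (∑ k, (Real.exp (-(e k (X i)) / T) * (1 - e k (X i) / T) / T) • g k)
      = ∑ k, ((if k = i then (Pbar i / T) • (C • ∑ j ∈ G.neighborFinset i, (X i - X j)) else 0)
          + (if k ∈ G.neighborFinset i then (Pbar k / T) • (C • (X i - X k)) else 0)) := by
        refine Finset.sum_congr rfl fun k _ => ?_
        rw [hcoef, hsplit]
    _ = (Pbar i / T) • (C • ∑ j ∈ G.neighborFinset i, (X i - X j))
          + ∑ k ∈ G.neighborFinset i, (Pbar k / T) • (C • (X i - X k)) := by
        rw [Finset.sum_add_distrib, Finset.sum_ite_eq' Finset.univ i, if_pos (Finset.mem_univ i)]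
        congr 1
        rw [Finset.sum_ite_mem, Finset.univ_inter]
    _ = ∑ j ∈ G.neighborFinset i, ((Pbar i / T) • (C • (X i - X j))
          + (Pbar j / T) • (C • (X i - X j))) := by
        rw [Finset.sum_add_distrib, Finset.smul_sum, Finset.smul_sum]
    _ = (C / T) • ∑ j ∈ G.neighborFinset i, (Pbar j + Pbar i) • (X i - X j) := by
        rw [Finset.smul_sum]
        refine Finset.sum_congr rfl fun j _ => ?_
        rw [smul_smul, smul_smul, smul_smul, ← add_smul]
        congr 1
        ring
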